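/- Let n ≥ 1, k > 0, c > 0, α ∈ (0,1), let h₁ ∈ ℝⁿ be nonzero with ĥ₁ := h₁/‖h₁‖, let H be a symmetric positive definite real n×n matrix, and set M := k(Iₙ − α ĥ₁ ĥ₁ᵀ). Then every complex eigenvalue of the matrix J_r := −M H − (c α/‖h₁‖²) h₁ h₁ᵀ is real and strictly negative. -/

import Mathlib

noncomputable section
open Matrix Polynomial

/-- `μ ∈ ℂ` is an eigenvalue of the real matrix `A`, i.e. a root of its
characteristic polynomial over `ℂ`. -/
def IsEig {m : Type} [Fintype m] [DecidableEq m] (A : Matrix m m ℝ) (μ : ℂ) : Prop :=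
  ((A.charpoly).map (algebraMap ℝ ℂ)).IsRoot μ

namespace Stmt17Aux

lemma vecMulVec_mulVec {n : ℕ} {R : Type} [CommRing R] (a b x : Fin n → R) :
    Matrix.vecMulVec a b *ᵥ x = (b ⬝ᵥ x) • a := by
  funext i
  simp [Matrix.mulVec, dotProduct, Matrix.vecMulVec_apply, Finset.mul_sum,
    mul_comm, mul_left_comm, mul_assoc]

lemma vecMulVec_mul_vecMulVec {n : ℕ} {R : Type} [CommRing R] (a b c d : Fin n → R) :
    Matrix.vecMulVec a b * Matrix.vecMulVec c d = (b ⬝ᵥ c) • Matrix.vecMulVec a d := by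
  ext i j
  simp [Matrix.mul_apply, Matrix.vecMulVec_apply, dotProduct, Finset.sum_mul,
    Finset.mul_sum, mul_comm, mul_left_comm, mul_assoc]

/-- Symmetry of the bilinear form of a symmetric matrix. -/
lemma dot_symm {n : ℕ} {R : Type} [CommRing R] {M : Matrix (Fin n) (Fin n) R}
    (hsym : Mᵀ = M) (u w : Fin n → R) : u ⬝ᵥ M *ᵥ w = w ⬝ᵥ M *ᵥ u := by
  simp only [dotProduct, Matrix.mulVec, Finset.mul_sum]
  rw [Finset.sum_comm]
  refine Finset.sum_congr rfl fun i _ => Finset.sum_congr rfl fun j _ => ?_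
  have : M j i = M i j := by
    calc M j i = Mᵀ i j := (Matrix.transpose_apply M i j).symm
      _ = M i j := by rw [hsym]
  rw [this]; ring

/-- Casting a real quadratic/bilinear form to `ℂ`. -/
lemma dot_cast {n : ℕ} (M : Matrix (Fin n) (Fin n) ℝ) (u w : Fin n → ℝ) :
    ((u ⬝ᵥ M *ᵥ w : ℝ) : ℂ) =
      (fun i => (u i : ℂ)) ⬝ᵥ (M.map (algebraMap ℝ ℂ)) *ᵥ (fun i => (w i : ℂ)) := by
  simp only [dotProduct, Matrix.mulVec, Matrix.map_apply, Complex.coe_algebraMap]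
  push_cast
  rfl

/-- The complex quadratic form of a real symmetric positive definite matrix is a
positive real number. -/
lemma quad_real {n : ℕ} {M : Matrix (Fin n) (Fin n) ℝ} (hsym : Mᵀ = M)
    (hpos : ∀ x : Fin n → ℝ, x ≠ 0 → 0 < x ⬝ᵥ M *ᵥ x)
    (z : Fin n → ℂ) (hz : z ≠ 0) :
    ∃ r : ℝ, 0 < r ∧ star z ⬝ᵥ (M.map (algebraMap ℝ ℂ)) *ᵥ z = (r : ℂ) := by
  classical
  set u : Fin n → ℝ := fun i => (z i).re with hu
  set w : Fin n → ℝ := fun i => (z i).im with hw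
  set zu : Fin n → ℂ := fun i => (u i : ℂ) with hzu
  set zw : Fin n → ℂ := fun i => (w i : ℂ) with hzw
  have hzdec : z = zu + Complex.I • zw := by
    funext i
    simp [hzu, hzw, hu, hw, Complex.ext_iff]
  have hstar : star z = zu - Complex.I • zw := by
    funext i
    simp [hzu, hzw, hu, hw, Complex.ext_iff]
  set Mc := M.map (algebraMap ℝ ℂ) with hMc
  have hMcsym : Mcᵀ = Mc := by
    rw [hMc, ← Matrix.transpose_map, hsym]
  have hbil : zu ⬝ᵥ Mc *ᵥ zw = zw ⬝ᵥ Mc *ᵥ zu := dot_symm hMcsym zu zw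
  have key : star z ⬝ᵥ Mc *ᵥ z = zu ⬝ᵥ Mc *ᵥ zu + zw ⬝ᵥ Mc *ᵥ zw := by
    rw [hstar]
    conv_lhs => rw [hzdec]
    rw [Matrix.mulVec_add, Matrix.mulVec_smul, dotProduct_add,
      sub_dotProduct, sub_dotProduct,
      smul_dotProduct, smul_dotProduct,
      dotProduct_smul, dotProduct_smul, hbil]
    simp only [smul_eq_mul, Complex.I_mul_I]
    ring_nf
    rw [Complex.I_sq]
    ring
  have nonneg : ∀ x : Fin n → ℝ, 0 ≤ x ⬝ᵥ M *ᵥ x := by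
    intro x
    rcases eq_or_ne x 0 with h | h
    · simp [h]
    · exact (hpos x h).le
  refine ⟨u ⬝ᵥ M *ᵥ u + w ⬝ᵥ M *ᵥ w, ?_, ?_⟩
  · have hne : u ≠ 0 ∨ w ≠ 0 := by
      by_contra hcon
      push_neg at hcon
      apply hz
      funext i
      have h1 : (z i).re = 0 := by have := congrFun hcon.1 i; simpa [hu] using this
      have h2 : (z i).im = 0 := by have := congrFun hcon.2 i; simpa [hw] using this
      exact Complex.ext (by simpa using h1) (by simpa using h2)
    rcases hne with h | h
    · exact add_pos_of_pos_of_nonneg (hpos u h) (nonneg w)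
    · exact add_pos_of_nonneg_of_pos (nonneg u) (hpos w h)
  · rw [key]
    push_cast
    rw [dot_cast, dot_cast]

/-- A root of the characteristic polynomial admits an eigenvector. -/
lemma exists_eigvec {n : ℕ} (B : Matrix (Fin n) (Fin n) ℂ) {μ : ℂ}
    (h : B.charpoly.IsRoot μ) : ∃ x : Fin n → ℂ, x ≠ 0 ∧ B *ᵥ x = μ • x := by
  classical
  have hdet : (Matrix.diagonal (fun _ : Fin n => μ) - B).det = 0 := by
    have h0 : Polynomial.eval μ B.charpoly = 0 := h
    rw [Matrix.charpoly] at h0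
    have h1 : (Polynomial.evalRingHom μ) (Matrix.charmatrix B).det =
        ((Matrix.charmatrix B).map (Polynomial.evalRingHom μ)).det :=
      RingHom.map_det _ _
    have h2 : (Matrix.charmatrix B).map (Polynomial.evalRingHom μ) =
        Matrix.diagonal (fun _ : Fin n => μ) - B := by
      ext i j
      by_cases hij : i = j
      · subst hij
        simp [Matrix.charmatrix_apply, Matrix.diagonal_apply_eq]
      · simp [Matrix.charmatrix_apply, Matrix.diagonal_apply_ne _ hij,
          Matrix.diagonal_apply_ne _ hij]
    rw [h2] at h1
    simpa [h0] using h1.symm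
  obtain ⟨x, hxne, hxeq⟩ := (Matrix.exists_mulVec_eq_zero_iff).2 hdet
  refine ⟨x, hxne, ?_⟩
  rw [Matrix.sub_mulVec, sub_eq_zero] at hxeq
  rw [← hxeq]
  funext i
  simp [Matrix.mulVec_diagonal]

end Stmt17Aux

open Stmt17Aux in
/-- Every complex eigenvalue of `J_r = −MH − (cα/‖h₁‖²) h₁h₁ᵀ`, with
`M = k(I − α ĥ₁ĥ₁ᵀ)`, `α ∈ (0,1)`, `k, c > 0`, `H ≻ 0`, is real and
strictly negative. -/
theorem stmt17 (n : ℕ) (hn : 1 ≤ n) (k c α : ℝ)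
    (hk : 0 < k) (hc : 0 < c) (hα : α ∈ Set.Ioo (0 : ℝ) 1)
    (h₁ : Fin n → ℝ) (hh₁ : h₁ ≠ 0)
    (H : Matrix (Fin n) (Fin n) ℝ) (hH : H.PosDef) :
    ∀ μ : ℂ,
      IsEig (-((k • ((1 : Matrix (Fin n) (Fin n) ℝ) -
            α • Matrix.vecMulVec ((Real.sqrt (h₁ ⬝ᵥ h₁))⁻¹ • h₁)
              ((Real.sqrt (h₁ ⬝ᵥ h₁))⁻¹ • h₁))) * H) -
          (c * α / (h₁ ⬝ᵥ h₁)) • Matrix.vecMulVec h₁ h₁) μ →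
      μ.im = 0 ∧ μ.re < 0 := by
  classical
  obtain ⟨hα0, hα1⟩ := hα
  intro μ hμ
  -- basic positivity facts
  set t : ℝ := h₁ ⬝ᵥ h₁ with ht_def
  have ht : 0 < t := by
    obtain ⟨i, hi⟩ : ∃ i, h₁ i ≠ 0 := Function.ne_iff.mp hh₁
    rw [ht_def]
    exact Finset.sum_pos' (fun j _ => mul_self_nonneg _)
      ⟨i, Finset.mem_univ i, mul_self_pos.mpr hi⟩
  set s : ℝ := Real.sqrt t with hs_def
  have hs : 0 < s := Real.sqrt_pos.mpr ht
  have hs2 : s * s = t := Real.mul_self_sqrt ht.le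
  have hstinv : s⁻¹ * s⁻¹ * t = 1 := by
    field_simp
    nlinarith
  set v : Fin n → ℝ := s⁻¹ • h₁ with hv_def
  set V : Matrix (Fin n) (Fin n) ℝ := Matrix.vecMulVec h₁ h₁ with hV_def
  have hvv : Matrix.vecMulVec v v = (s⁻¹ * s⁻¹) • V := by
    ext i j
    simp [hv_def, hV_def, Matrix.vecMulVec_apply]
    ring
  set M : Matrix (Fin n) (Fin n) ℝ :=
      k • ((1 : Matrix (Fin n) (Fin n) ℝ) - α • Matrix.vecMulVec v v) with hM_def
  set β : ℝ := c * α / t with hβ_def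
  have hβ : 0 < β := div_pos (mul_pos hc hα0) ht
  have hkα : 0 < k * (1 - α) := mul_pos hk (by linarith)
  set γ : ℝ := (k * (1 - α))⁻¹ * β with hγ_def
  have hγ : 0 < γ := mul_pos (inv_pos.mpr hkα) hβ
  set Q : Matrix (Fin n) (Fin n) ℝ := H + γ • V with hQ_def
  -- symmetry facts
  have hVsym : Vᵀ = V := by
    ext i j
    simp [hV_def, Matrix.vecMulVec_apply, mul_comm]
  have hHsym : Hᵀ = H := by
    have := hH.isHermitian
    rw [Matrix.IsHermitian] at this
    simpa using this
  have hMsym : Mᵀ = M := by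
    rw [hM_def, hvv]
    simp [Matrix.transpose_smul, Matrix.transpose_sub, hVsym]
  have hQsym : Qᵀ = Q := by
    rw [hQ_def]
    simp [Matrix.transpose_add, Matrix.transpose_smul, hVsym, hHsym]
  -- V *ᵥ x = (h₁ ⬝ᵥ x) • h₁ and quadratic forms
  have hM_eq : M = k • (1 : Matrix (Fin n) (Fin n) ℝ) - (k * (α * (s⁻¹ * s⁻¹))) • V := by
    rw [hM_def, hvv, smul_sub, smul_smul, smul_smul, mul_assoc]
  -- positivity of M's quadratic form
  have hMpos : ∀ x : Fin n → ℝ, x ≠ 0 → 0 < x ⬝ᵥ M *ᵥ x := by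
    intro x hx
    have hxx : 0 < x ⬝ᵥ x := by
      obtain ⟨i, hi⟩ : ∃ i, x i ≠ 0 := Function.ne_iff.mp hx
      exact Finset.sum_pos' (fun j _ => mul_self_nonneg _)
        ⟨i, Finset.mem_univ i, mul_self_pos.mpr hi⟩
    have hCS : (h₁ ⬝ᵥ x) ^ 2 ≤ t * (x ⬝ᵥ x) := by
      have := Finset.sum_mul_sq_le_sq_mul_sq Finset.univ h₁ x
      calc (h₁ ⬝ᵥ x) ^ 2 = (∑ i, h₁ i * x i) ^ 2 := rfl
        _ ≤ (∑ i, h₁ i ^ 2) * ∑ i, x i ^ 2 := this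
        _ = t * (x ⬝ᵥ x) := by
            simp [ht_def, dotProduct, sq]
    have hVx : x ⬝ᵥ V *ᵥ x = (h₁ ⬝ᵥ x) ^ 2 := by
      rw [hV_def, Stmt17Aux.vecMulVec_mulVec, dotProduct_smul]
      rw [show x ⬝ᵥ h₁ = h₁ ⬝ᵥ x from dotProduct_comm x h₁]
      rw [smul_eq_mul, sq]
    have hMx : x ⬝ᵥ M *ᵥ x = k * (x ⬝ᵥ x) - k * (α * (s⁻¹ * s⁻¹)) * (h₁ ⬝ᵥ x) ^ 2 := by
      rw [hM_eq, Matrix.sub_mulVec, dotProduct_sub, Matrix.smul_mulVec,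
        Matrix.smul_mulVec, dotProduct_smul, dotProduct_smul,
        Matrix.one_mulVec, hVx]
      simp [smul_eq_mul]
    rw [hMx]
    have h1 : k * (α * (s⁻¹ * s⁻¹)) * (h₁ ⬝ᵥ x) ^ 2 ≤ k * (α * (s⁻¹ * s⁻¹)) * (t * (x ⬝ᵥ x)) := by
      apply mul_le_mul_of_nonneg_left hCS
      positivity
    have h2 : k * (α * (s⁻¹ * s⁻¹)) * (t * (x ⬝ᵥ x)) = k * α * (x ⬝ᵥ x) := by
      rw [show k * (α * (s⁻¹ * s⁻¹)) * (t * (x ⬝ᵥ x))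
          = k * α * (x ⬝ᵥ x) * (s⁻¹ * s⁻¹ * t) from by ring, hstinv, mul_one]
    nlinarith [mul_pos (mul_pos hk (show (0:ℝ) < 1 - α by linarith)) hxx, h1, h2]
  -- positivity of Q's quadratic form
  have hQpos : ∀ x : Fin n → ℝ, x ≠ 0 → 0 < x ⬝ᵥ Q *ᵥ x := by
    intro x hx
    have hHx : 0 < x ⬝ᵥ H *ᵥ x := by
      have := hH.dotProduct_mulVec_pos hx
      simpa using this
    have hVx : x ⬝ᵥ V *ᵥ x = (h₁ ⬝ᵥ x) ^ 2 := by
      rw [hV_def, Stmt17Aux.vecMulVec_mulVec, dotProduct_smul]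
      rw [show x ⬝ᵥ h₁ = h₁ ⬝ᵥ x from dotProduct_comm x h₁]
      rw [smul_eq_mul, sq]
    have : x ⬝ᵥ Q *ᵥ x = x ⬝ᵥ H *ᵥ x + γ * (h₁ ⬝ᵥ x) ^ 2 := by
      rw [hQ_def, Matrix.add_mulVec, dotProduct_add, Matrix.smul_mulVec,
        dotProduct_smul, hVx]
      simp [smul_eq_mul]
    rw [this]
    have : 0 ≤ γ * (h₁ ⬝ᵥ x) ^ 2 := by positivity
    linarith
  -- key algebraic identity: M * Q = M * H + β • V
  have hMV : M * V = (k * (1 - α)) • V := by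
    rw [hM_eq, Matrix.sub_mul, Matrix.smul_mul, Matrix.smul_mul, Matrix.one_mul,
      hV_def, Stmt17Aux.vecMulVec_mul_vecMulVec, ← ht_def, smul_smul]
    rw [← sub_smul]
    congr 1
    rw [show k - k * (α * (s⁻¹ * s⁻¹)) * t = k - k * α * (s⁻¹ * s⁻¹ * t) from by ring, hstinv]
    ring
  have hMQ : M * Q = M * H + β • V := by
    rw [hQ_def, Matrix.mul_add, Matrix.mul_smul, hMV, smul_smul]
    congr 2
    rw [hγ_def]
    field_simp
  -- identify the statement's matrix with -(M * Q)
  have hA : -(M * Q) = -(M * H) - β • V := by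
    rw [hMQ, neg_add, sub_eq_add_neg]
  rw [← hA] at hμ
  -- move to ℂ
  set f : ℝ →+* ℂ := algebraMap ℝ ℂ with hf_def
  set Mc := M.map f with hMc_def
  set Qc := Q.map f with hQc_def
  have hμc : ((-(M * Q)).map f).charpoly.IsRoot μ := by
    rw [Matrix.charpoly_map]
    exact hμ
  have hmapeq : (-(M * Q)).map f = -(Mc * Qc) := by
    have h1 : (-(M * Q)).map f = (RingHom.mapMatrix f) (-(M * Q)) := rfl
    rw [h1, map_neg, _root_.map_mul]
    rfl
  rw [hmapeq] at hμc
  obtain ⟨x, hx0, hx⟩ := exists_eigvec _ hμc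
  set ν : ℂ := -μ with hν_def
  have hxeq : Mc *ᵥ (Qc *ᵥ x) = ν • x := by
    have := hx
    rw [Matrix.neg_mulVec] at this
    have h2 : (Mc * Qc) *ᵥ x = -(μ • x) := by
      rw [← this]; ring_nf
    rw [Matrix.mulVec_mulVec, h2, hν_def, neg_smul]
  set y : Fin n → ℂ := Qc *ᵥ x with hy_def
  have hy0 : y ≠ 0 := by
    intro hy
    have hdet0 : Qc.det = 0 := by
      rw [hQc_def]
      exact Matrix.exists_mulVec_eq_zero_iff.mp ⟨x, hx0, by rw [← hQc_def, ← hy_def, hy]⟩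
    have : (Q.det : ℂ) = 0 := by
      rw [← hdet0, hQc_def]
      exact (RingHom.map_det f Q).symm ▸ rfl
    have hQdet : Q.det = 0 := by exact_mod_cast this
    obtain ⟨z, hzne, hzeq⟩ := Matrix.exists_mulVec_eq_zero_iff.mpr hQdet
    have := hQpos z hzne
    rw [hzeq] at this
    simp at this
  -- the two positive real quadratic forms
  obtain ⟨r, hr, hrq⟩ := quad_real hMsym hMpos y hy0
  obtain ⟨q, hq, hqq⟩ := quad_real hQsym hQpos x hx0
  -- star y ⬝ᵥ x = q
  have hyx : star y ⬝ᵥ x = (q : ℂ) := by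
    have h1 : star y ⬝ᵥ x = star (star x ⬝ᵥ y) := Matrix.star_dotProduct y x
    have h2 : star x ⬝ᵥ y = (q : ℂ) := hqq
    rw [h1, h2]
    simp [Complex.conj_ofReal]
  -- r = ν * q
  have hkey : (r : ℂ) = ν * q := by
    have h3 : star y ⬝ᵥ Mc *ᵥ y = (r : ℂ) := hrq
    have h4 : Mc *ᵥ y = ν • x := hxeq
    rw [← h3, h4, dotProduct_smul, smul_eq_mul, hyx]
  have hν : ν = ((r / q : ℝ) : ℂ) := by
    have hq0 : (q : ℂ) ≠ 0 := by exact_mod_cast hq.ne'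
    rw [Complex.ofReal_div, hkey, mul_div_assoc, div_self hq0, mul_one]
  have hμν : μ = -((r / q : ℝ) : ℂ) := by
    rw [← hν, hν_def, neg_neg]
  constructor
  · rw [hμν]; simp
  · rw [hμν]
    simp only [Complex.neg_re, Complex.ofReal_re]
    have : 0 < r / q := div_pos hr hq
    linarith
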